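/- If a graph H on n vertices contains no complete subgraph K_k, then H has at most ((k-2)/(k-1))·n²/2 edges. -/

import Mathlib

open Finset SimpleGraph

lemma turan_graph_edge_bound (n r : ℕ) (hr : 1 ≤ r) :
    (((turanGraph n r).edgeFinset.card : ℝ)) ≤ ((r : ℝ) - 1) / r * (n : ℝ) ^ 2 / 2 := by
  classical
  set c : ℕ → ℕ := fun j => #(univ.filter fun w : Fin n => (w : ℕ) % r = j) with hc
  have hmaps : ∀ v ∈ (univ : Finset (Fin n)), (v : ℕ) % r ∈ range r :=
    fun v _ => mem_range.2 (Nat.mod_lt _ hr)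
  have hcard : ∑ j ∈ range r, c j = n := by
    simpa using (Finset.card_eq_sum_card_fiberwise hmaps).symm
  have hcle : ∀ v : Fin n, c ((v : ℕ) % r) ≤ n := by
    intro v
    simpa using (Finset.card_filter_le (univ : Finset (Fin n)) _)
  have hdeg : ∀ v : Fin n, (turanGraph n r).degree v = n - c ((v : ℕ) % r) := by
    intro v
    rw [← card_neighborFinset_eq_degree]
    have : (turanGraph n r).neighborFinset v
        = (univ.filter fun w : Fin n => (w : ℕ) % r = (v : ℕ) % r)ᶜ := by
      ext w
      rw [mem_neighborFinset]
      simp [turanGraph, ne_comm, eq_comm]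
    rw [this, card_compl]
    simp [c]
  have hsum : ∑ v : Fin n, (turanGraph n r).degree v = 2 * (turanGraph n r).edgeFinset.card :=
    SimpleGraph.sum_degrees_eq_twice_card_edges _
  have key : (2 * ((turanGraph n r).edgeFinset.card : ℝ))
      = (n : ℝ) ^ 2 - ∑ j ∈ range r, (c j : ℝ) ^ 2 := by
    have h1 : ∑ v : Fin n, ((turanGraph n r).degree v : ℝ)
        = ∑ v : Fin n, ((n : ℝ) - (c ((v : ℕ) % r) : ℝ)) := by
      refine Finset.sum_congr rfl fun v _ => ?_
      rw [hdeg v, Nat.cast_sub (hcle v)]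
    have h2 : ∑ v : Fin n, (c ((v : ℕ) % r) : ℝ) = ∑ j ∈ range r, (c j : ℝ) ^ 2 := by
      rw [← Finset.sum_fiberwise_of_maps_to hmaps (fun v : Fin n => (c ((v : ℕ) % r) : ℝ))]
      refine Finset.sum_congr rfl fun j hj => ?_
      have : ∀ v ∈ univ.filter (fun v : Fin n => (v : ℕ) % r = j),
          (c ((v : ℕ) % r) : ℝ) = (c j : ℝ) := by
        intro v hv
        rw [(mem_filter.1 hv).2]
      rw [Finset.sum_congr rfl this, Finset.sum_const]
      simp [c, sq]
    have := hsum
    have hcast : (∑ v : Fin n, ((turanGraph n r).degree v : ℝ))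
        = 2 * ((turanGraph n r).edgeFinset.card : ℝ) := by
      exact_mod_cast congrArg (Nat.cast : ℕ → ℝ) this
    rw [← hcast, h1, Finset.sum_sub_distrib, h2]
    simp [sq]
  have cauchy : ((n : ℝ)) ^ 2 ≤ (r : ℝ) * ∑ j ∈ range r, (c j : ℝ) ^ 2 := by
    have := sq_sum_le_card_mul_sum_sq (s := range r) (f := fun j => (c j : ℝ))
    have hn' : (∑ j ∈ range r, (c j : ℝ)) = (n : ℝ) := by exact_mod_cast hcard
    simpa [hn'] using this
  have hr' : (0 : ℝ) < r := by exact_mod_cast hr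
  rw [div_mul_eq_mul_div, div_div, le_div_iff₀ (by positivity)]
  nlinarith [key, cauchy]

/-- Turán's theorem bound: a `K_k`-free simple graph on `n` vertices has at most
`((k-2)/(k-1)) * n^2 / 2` edges. -/
theorem turan_bound {V : Type*} [Fintype V] [DecidableEq V] (n k : ℕ)
    (hn : Fintype.card V = n) (hk : 2 ≤ k)
    (H : SimpleGraph V) [DecidableRel H.Adj] (hfree : H.CliqueFree k) :
    (H.edgeFinset.card : ℝ) ≤ (((k : ℝ) - 2) / ((k : ℝ) - 1)) * (n : ℝ) ^ 2 / 2 := by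
  classical
  obtain ⟨r, rfl⟩ : ∃ r, k = r + 1 := ⟨k - 1, by omega⟩
  have hr : 0 < r := by omega
  obtain ⟨G, _, hG⟩ := exists_isTuranMaximal (V := V) (r := r) hr
  have h1 : H.edgeFinset.card ≤ G.edgeFinset.card := hG.2 hfree
  obtain ⟨f⟩ := hG.nonempty_iso_turanGraph
  have h2 : G.edgeFinset.card = (turanGraph (Fintype.card V) r).edgeFinset.card :=
    f.card_edgeFinset_eq
  have h3 := turan_graph_edge_bound (Fintype.card V) r hr
  rw [hn] at h3
  have : ((r : ℝ) + 1 - 2) / ((r : ℝ) + 1 - 1) = ((r : ℝ) - 1) / r := by ring_nf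
  calc (H.edgeFinset.card : ℝ) ≤ ((turanGraph n r).edgeFinset.card : ℝ) := by
        rw [hn] at h2; exact_mod_cast h2 ▸ h1
    _ ≤ ((r : ℝ) - 1) / r * (n : ℝ) ^ 2 / 2 := h3
    _ = (((r + 1 : ℕ) : ℝ) - 2) / (((r + 1 : ℕ) : ℝ) - 1) * (n : ℝ) ^ 2 / 2 := by
        push_cast; rw [this]
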